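/- Let G be a connected P5-free chordal bipartite graph with bipartition (A,B), maximum biclique (A1,B1), and NNO orderings A2 = (u_1,...,u_p), B2 = (v_1,...,v_q). If G has a Hamiltonian path and |A| = |B|, then deg(u_g) ≥ g for all 1 ≤ g ≤ p and deg(v_h) ≥ h for all 1 ≤ h ≤ q. -/

import Mathlib

open SimpleGraph Finset

variable {V : Type*}

/-- `(A, B)` is a bipartition of the graph `G`. -/
def IsBipartitionOf (G : SimpleGraph V) (A B : Finset V) : Prop :=
  Disjoint A B ∧ (∀ v : V, v ∈ A ∨ v ∈ B) ∧
    ∀ ⦃x y : V⦄, G.Adj x y → (x ∈ A ∧ y ∈ B) ∨ (x ∈ B ∧ y ∈ A)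

/-- `G` has no induced path on `n` vertices. -/
def PFree (n : ℕ) (G : SimpleGraph V) : Prop :=
  ∀ f : Fin n → V, Function.Injective f →
    ¬ (∀ i j : Fin n, G.Adj (f i) (f j) ↔ ((i : ℕ) + 1 = (j : ℕ) ∨ (j : ℕ) + 1 = (i : ℕ)))

/-- Every cycle of length at least 6 has a chord. -/
def ChordalBipartite (G : SimpleGraph V) : Prop :=
  ∀ (v : V) (c : G.Walk v v), c.IsCycle → 6 ≤ c.length →
    ∃ x y : V, x ∈ c.support ∧ y ∈ c.support ∧ G.Adj x y ∧ s(x, y) ∉ c.edges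

/-- `(A1, B1)` is a maximal biclique of `G` within the bipartition `(A, B)`:
it is a complete bipartite subgraph and no vertex can be added to either side. -/
def IsMaximalBiclique (G : SimpleGraph V) (A B A1 B1 : Finset V) : Prop :=
  A1 ⊆ A ∧ B1 ⊆ B ∧ (∀ x ∈ A1, ∀ y ∈ B1, G.Adj x y) ∧
    (∀ x ∈ A, (∀ y ∈ B1, G.Adj x y) → x ∈ A1) ∧
    (∀ y ∈ B, (∀ x ∈ A1, G.Adj x y) → y ∈ B1)

section Aux

variable {G : SimpleGraph V} {A B : Finset V}

private lemma aux_nadj (hd : Disjoint A B)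
    (hadj : ∀ ⦃x y : V⦄, G.Adj x y → (x ∈ A ∧ y ∈ B) ∨ (x ∈ B ∧ y ∈ A))
    {x y : V} (hx : x ∈ A) (hy : y ∈ A) : ¬ G.Adj x y := by
  intro h
  rcases hadj h with ⟨_, hyB⟩ | ⟨hxB, _⟩
  · exact (Finset.disjoint_left.mp hd hy) hyB
  · exact (Finset.disjoint_left.mp hd hx) hxB

private lemma aux_nbr (hd : Disjoint A B)
    (hadj : ∀ ⦃x y : V⦄, G.Adj x y → (x ∈ A ∧ y ∈ B) ∨ (x ∈ B ∧ y ∈ A))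
    {x y : V} (hx : x ∈ A) (h : G.Adj x y) : y ∈ B := by
  rcases hadj h with ⟨_, hyB⟩ | ⟨hxB, _⟩
  · exact hyB
  · exact absurd hxB (Finset.disjoint_left.mp hd hx)

/-- From four path edges and the relevant non-adjacency facts, get an induced `P₅`,
contradicting `P₅`-freeness. -/
private lemma p5_of (hp5 : PFree 5 G) {a b c d e : V}
    (h1 : G.Adj a b) (h2 : G.Adj b c) (h3 : G.Adj c d) (h4 : G.Adj d e)
    (n13 : ¬G.Adj a c) (n14 : ¬G.Adj a d) (n15 : ¬G.Adj a e)
    (n24 : ¬G.Adj b d) (n25 : ¬G.Adj b e) (n35 : ¬G.Adj c e)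
    (hce : c ≠ e) : False := by
  have nab : a ≠ b := h1.ne
  have nbc : b ≠ c := h2.ne
  have ncd : c ≠ d := h3.ne
  have nde : d ≠ e := h4.ne
  have nac : a ≠ c := by rintro rfl; exact n14 h3
  have nad : a ≠ d := by rintro rfl; exact n15 h4
  have nae : a ≠ e := by rintro rfl; exact n14 h4.symm
  have nbd : b ≠ d := by rintro rfl; exact n25 h4
  have nbe : b ≠ e := by rintro rfl; exact n24 h4.symm
  have h1' := h1.symm; have h2' := h2.symm; have h3' := h3.symm; have h4' := h4.symm
  have n13' : ¬G.Adj c a := fun h => n13 h.symm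
  have n14' : ¬G.Adj d a := fun h => n14 h.symm
  have n15' : ¬G.Adj e a := fun h => n15 h.symm
  have n24' : ¬G.Adj d b := fun h => n24 h.symm
  have n25' : ¬G.Adj e b := fun h => n25 h.symm
  have n35' : ¬G.Adj e c := fun h => n35 h.symm
  refine hp5 ![a, b, c, d, e] ?_ ?_
  · intro i j hij
    fin_cases i <;> fin_cases j <;>
      simp_all [nab.symm, nbc.symm, ncd.symm, nde.symm, nac.symm, nad.symm, nae.symm,
        nbd.symm, nbe.symm, hce.symm]
  · intro i j
    fin_cases i <;> fin_cases j <;>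
      simp_all [G.irrefl]

variable [DecidableEq V]

/-- Any two distinct vertices on the same side of a connected `P₅`-free bipartite graph
have a common neighbour. -/
private lemma common_nbr (hconn : G.Connected) (hp5 : PFree 5 G)
    (hd : Disjoint A B)
    (hadj : ∀ ⦃x y : V⦄, G.Adj x y → (x ∈ A ∧ y ∈ B) ∨ (x ∈ B ∧ y ∈ A)) :
    ∀ d : ℕ, ∀ x x' : V, x ∈ A → x' ∈ A → x ≠ x' → G.dist x x' = d →
      ∃ c, G.Adj x c ∧ G.Adj x' c := by
  intro d
  induction d using Nat.strong_induction_on with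
  | _ d IH =>
  intro x x' hx hx' hne hdist
  have hd0 : d ≠ 0 := by
    rintro rfl
    exact hne (hconn.dist_eq_zero_iff.mp hdist)
  obtain ⟨w, hw⟩ := exists_walk_of_dist_ne_zero (show G.dist x x' ≠ 0 by omega)
  rw [hdist] at hw
  cases w with
  | nil => simp at hw; omega
  | cons h1 w1 =>
    rename_i b
    cases w1 with
    | nil => exact absurd h1 (aux_nadj hd hadj hx hx')
    | cons h2 w2 =>
      rename_i y
      have hb : b ∈ B := aux_nbr hd hadj hx h1
      have hy : y ∈ A := by
        rcases hadj h2 with ⟨hbA, _⟩ | ⟨_, hyA⟩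
        · exact absurd hbA (Finset.disjoint_right.mp hd hb)
        · exact hyA
      cases w2 with
      | nil => exact ⟨b, h1, h2.symm⟩
      | cons h3 w3 =>
        have hlen : w3.length + 3 = d := by simpa using hw
        have hdyx : G.dist y x' ≤ d - 2 := by
          have := dist_le (Walk.cons h3 w3)
          simp at this
          omega
        have hyx' : y ≠ x' := by
          rintro rfl
          have := dist_le (Walk.cons h1 (Walk.cons h2 Walk.nil))
          simp at this
          rw [hdist] at this
          omega
        obtain ⟨c, hyc, hx'c⟩ := IH (G.dist y x') (by omega) y x' hy hx' hyx' rfl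
        by_cases hxc : G.Adj x c
        · exact ⟨c, hxc, hx'c⟩
        by_cases hx'b : G.Adj x' b
        · exact ⟨b, h1, hx'b⟩
        have hc : c ∈ B := aux_nbr hd hadj hy hyc
        exact absurd (p5_of hp5 h1 h2 hyc hx'c.symm
          (aux_nadj hd hadj hx hy) hxc (aux_nadj hd hadj hx hx')
          (aux_nadj (G := G) hd.symm (fun _ _ h => (hadj h).symm) hb hc)
          (fun h => hx'b h.symm) (aux_nadj hd hadj hy hx') hyx') (fun h => h)

variable [Fintype V] [DecidableRel G.Adj]

/-- Neighbourhoods of same-side vertices are comparable. -/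
private lemma comparable (hconn : G.Connected) (hp5 : PFree 5 G)
    (hd : Disjoint A B)
    (hadj : ∀ ⦃x y : V⦄, G.Adj x y → (x ∈ A ∧ y ∈ B) ∨ (x ∈ B ∧ y ∈ A))
    {x x' : V} (hx : x ∈ A) (hx' : x' ∈ A) (hne : x ≠ x') :
    G.neighborFinset x ⊆ G.neighborFinset x' ∨
      G.neighborFinset x' ⊆ G.neighborFinset x := by
  by_contra hcon
  push_neg at hcon
  obtain ⟨h1, h2⟩ := hcon
  obtain ⟨bb, hbb, hbb'⟩ := Finset.not_subset.mp h1
  obtain ⟨bb', hbb'2, hbb'3⟩ := Finset.not_subset.mp h2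
  rw [mem_neighborFinset] at hbb hbb'2
  rw [mem_neighborFinset] at hbb' hbb'3
  obtain ⟨c, hxc, hx'c⟩ := common_nbr hconn hp5 hd hadj (G.dist x x') x x' hx hx' hne rfl
  have hbB : bb ∈ B := aux_nbr hd hadj hx hbb
  have hcB : c ∈ B := aux_nbr hd hadj hx hxc
  have hb'B : bb' ∈ B := aux_nbr hd hadj hx' hbb'2
  have hnadjB : ∀ {s t : V}, s ∈ B → t ∈ B → ¬G.Adj s t :=
    fun hs ht => aux_nadj (G := G) hd.symm (fun _ _ h => (hadj h).symm) hs ht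
  exact p5_of hp5 hbb.symm hxc hx'c.symm hbb'2
    (hnadjB hbB hcB) (fun h => hbb' h.symm) (hnadjB hbB hb'B)
    (aux_nadj hd hadj hx hx') hbb'3 (hnadjB hcB hb'B)
    (by rintro rfl; exact hbb'3 hxc)

/-- If every neighbour of every vertex of `U` lies in `S`, `U ∪ S` misses some vertex,
and `G` has a Hamiltonian path, then `|U| ≤ |S|`. -/
private lemma ham_bound {a b : V} {w : G.Walk a b} (hw : w.IsHamiltonian)
    (U S : Finset V)
    (hN : ∀ x ∈ U, ∀ y : V, G.Adj x y → y ∈ S)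
    (hsmall : U.card + S.card < Fintype.card V) :
    U.card ≤ S.card := by
  by_contra hlt
  push_neg at hlt
  set L := w.support with hL
  have hnd : L.Nodup := hw.isPath.support_nodup
  have hmem : ∀ x : V, x ∈ L := hw.mem_support
  have hlen1 : L.length = w.length + 1 := w.length_support
  set f : ℕ → V := fun i => L.getD i a with hf
  have hfval : ∀ i (h : i < L.length), f i = L[i] := fun i h => L.getD_eq_getElem a h
  have hadjf : ∀ i, i + 1 < L.length → G.Adj (f i) (f (i + 1)) := by
    intro i hi
    have := List.isChain_iff_getElem.mp w.isChain_adj_support i (by rw [← hL]; omega)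
    simpa [hfval i (by omega), hfval (i+1) hi, List.get_eq_getElem] using this
  have hinjf : ∀ i j, i < L.length → j < L.length → f i = f j → i = j := by
    intro i j hi hj hij
    rw [hfval i hi, hfval j hj] at hij
    exact (hnd.getElem_inj_iff).mp hij
  have hsurj : ∀ x : V, ∃ i, i < L.length ∧ f i = x := by
    intro x
    obtain ⟨i, hi, hix⟩ := List.mem_iff_getElem.mp (hmem x)
    exact ⟨i, hi, by rw [hfval i hi]; exact hix⟩
  set IU : Finset ℕ := (Finset.range L.length).filter (fun i => f i ∈ U) with hIU
  set IS : Finset ℕ := (Finset.range L.length).filter (fun i => f i ∈ S) with hIS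
  have cardIU : IU.card = U.card := by
    apply Finset.card_bij (fun i _ => f i)
    · intro i hi; exact (Finset.mem_filter.mp hi).2
    · intro i hi j hj hij
      exact hinjf i j (Finset.mem_range.mp (Finset.mem_filter.mp hi).1)
        (Finset.mem_range.mp (Finset.mem_filter.mp hj).1) hij
    · intro x hx
      obtain ⟨i, hi, hix⟩ := hsurj x
      exact ⟨i, Finset.mem_filter.mpr ⟨Finset.mem_range.mpr hi, hix ▸ hx⟩, hix⟩
  have cardIS : IS.card = S.card := by
    apply Finset.card_bij (fun i _ => f i)
    · intro i hi; exact (Finset.mem_filter.mp hi).2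
    · intro i hi j hj hij
      exact hinjf i j (Finset.mem_range.mp (Finset.mem_filter.mp hi).1)
        (Finset.mem_range.mp (Finset.mem_filter.mp hj).1) hij
    · intro x hx
      obtain ⟨i, hi, hix⟩ := hsurj x
      exact ⟨i, Finset.mem_filter.mpr ⟨Finset.mem_range.mpr hi, hix ▸ hx⟩, hix⟩
  set n : ℕ := L.length - 1 with hn'
  have pred_mem : ∀ i ∈ IU, 0 < i → i - 1 ∈ IS := by
    intro i hi hpos
    obtain ⟨hir, hiu⟩ := Finset.mem_filter.mp hi
    have hir' := Finset.mem_range.mp hir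
    have hadj' : G.Adj (f (i - 1)) (f i) := by
      have := hadjf (i - 1) (by omega)
      simpa [Nat.sub_add_cancel hpos] using this
    exact Finset.mem_filter.mpr ⟨Finset.mem_range.mpr (by omega),
      hN (f i) hiu (f (i-1)) hadj'.symm⟩
  have succ_mem : ∀ i ∈ IU, i ≠ n → i + 1 ∈ IS := by
    intro i hi hin
    obtain ⟨hir, hiu⟩ := Finset.mem_filter.mp hi
    have hir' := Finset.mem_range.mp hir
    have hi1 : i + 1 < L.length := by omega
    exact Finset.mem_filter.mpr ⟨Finset.mem_range.mpr hi1,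
      hN (f i) hiu (f (i+1)) (hadjf i hi1)⟩
  have hmapinj : Set.InjOn (fun i => i + 1) (IU.erase n : Set ℕ) := by
    intro i _ j _ h
    simpa using h
  have hcard1 : (IU.erase n).card ≤ IS.card :=
    Finset.card_le_card_of_injOn (fun i => i + 1)
      (fun i hi => succ_mem i (Finset.mem_of_mem_erase hi) (Finset.ne_of_mem_erase hi))
      hmapinj
  have hnIU : n ∈ IU := by
    by_contra h
    rw [Finset.erase_eq_of_notMem h] at hcard1
    omega
  have hcard2 : IS.card ≤ (IU.erase n).card := by
    rw [Finset.card_erase_of_mem hnIU]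
    omega
  have predIS : ∀ j ∈ IS, 0 < j ∧ j - 1 ∈ IU := by
    intro j hj
    obtain ⟨i, hi, hij⟩ := Finset.surj_on_of_inj_on_of_card_le
      (fun i (_ : i ∈ IU.erase n) => i + 1)
      (fun i hi => succ_mem i (Finset.mem_of_mem_erase hi) (Finset.ne_of_mem_erase hi))
      (fun i j hi hj h => hmapinj hi hj h) hcard2 j hj
    have : j = i + 1 := by simpa using hij
    exact ⟨by omega, by rw [this]; simpa using Finset.mem_of_mem_erase hi⟩
  -- a vertex outside U ∪ S
  obtain ⟨z, hzU, hzS⟩ : ∃ z : V, z ∉ U ∧ z ∉ S := by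
    by_contra h
    push_neg at h
    have hsub : (Finset.univ : Finset V) ⊆ U ∪ S := by
      intro z _
      by_cases hz : z ∈ U
      · exact Finset.mem_union_left _ hz
      · exact Finset.mem_union_right _ (h z hz)
    have h1 := Finset.card_le_card hsub
    have h2 := Finset.card_union_le U S
    rw [Finset.card_univ] at h1
    omega
  obtain ⟨m, hm, hmz⟩ := hsurj z
  have hmIU : m ∉ IU := fun h => hzU (hmz ▸ (Finset.mem_filter.mp h).2)
  have hmIS : m ∉ IS := fun h => hzS (hmz ▸ (Finset.mem_filter.mp h).2)
  have hnlt : n < L.length := by omega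
  have hmn : m < n := by
    have : m ≠ n := fun h => hmIU (h ▸ hnIU)
    omega
  set T : Finset ℕ := (Finset.range L.length).filter
    (fun k => m < k ∧ (k ∈ IU ∨ k ∈ IS)) with hT
  have hTne : T.Nonempty :=
    ⟨n, Finset.mem_filter.mpr ⟨Finset.mem_range.mpr hnlt, hmn, Or.inl hnIU⟩⟩
  set k0 := T.min' hTne with hk0def
  have hk0 := T.min'_mem hTne
  rw [Finset.mem_filter, Finset.mem_range] at hk0
  obtain ⟨hk0len, hmk0, hk0mem⟩ := hk0
  have hprev : k0 - 1 ∉ IU ∧ k0 - 1 ∉ IS := by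
    rcases eq_or_lt_of_le (show m ≤ k0 - 1 by omega) with heq | hlt'
    · have : f (k0 - 1) = z := heq ▸ hmz
      constructor
      · intro h; exact hzU (this ▸ (Finset.mem_filter.mp h).2)
      · intro h; exact hzS (this ▸ (Finset.mem_filter.mp h).2)
    · constructor <;> intro h
      · have : k0 - 1 ∈ T := Finset.mem_filter.mpr
          ⟨Finset.mem_range.mpr (by omega), hlt', Or.inl h⟩
        have := T.min'_le _ this
        omega
      · have : k0 - 1 ∈ T := Finset.mem_filter.mpr
          ⟨Finset.mem_range.mpr (by omega), hlt', Or.inr h⟩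
        have := T.min'_le _ this
        omega
  rcases hk0mem with hk | hk
  · exact hprev.2 (pred_mem k0 hk (by omega))
  · exact hprev.1 (predIS k0 hk).2

/-- The key one-sided statement. -/
private lemma side_bound {p : ℕ} (u : Fin p → V)
    (hconn : G.Connected) (hp5 : PFree 5 G)
    (hd : Disjoint A B) (hcov : ∀ x : V, x ∈ A ∨ x ∈ B)
    (hadj : ∀ ⦃x y : V⦄, G.Adj x y → (x ∈ A ∧ y ∈ B) ∨ (x ∈ B ∧ y ∈ A))
    (hu : Function.Injective u) (huA : ∀ i, u i ∈ A)
    (humono : ∀ i j : Fin p, i ≤ j → G.degree (u i) ≤ G.degree (u j))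
    (hAB : A.card ≤ B.card)
    (hham : ∃ (a b : V) (w : G.Walk a b), w.IsHamiltonian)
    (g : Fin p) : (g : ℕ) + 1 ≤ G.degree (u g) := by
  by_contra hdeg
  push_neg at hdeg
  have hdeg' : G.degree (u g) ≤ (g : ℕ) := by omega
  -- nested neighbourhoods
  have hcomp : ∀ i : Fin p, i ≤ g →
      G.neighborFinset (u i) ⊆ G.neighborFinset (u g) := by
    intro i hig
    rcases eq_or_ne i g with rfl | hne
    · exact subset_rfl
    rcases comparable hconn hp5 hd hadj (huA i) (huA g) (fun h => hne (hu h)) with h | h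
    · exact h
    · have hdi : G.degree (u i) ≤ G.degree (u g) := humono i g hig
      rw [← G.card_neighborFinset_eq_degree, ← G.card_neighborFinset_eq_degree] at hdi
      rw [Finset.eq_of_subset_of_card_le h hdi]
  set U : Finset V := (Finset.Iic g).image u with hU
  set S : Finset V := G.neighborFinset (u g) with hS
  have cardU : U.card = (g : ℕ) + 1 := by
    rw [hU, Finset.card_image_of_injective _ hu, Fin.card_Iic]
  have cardS : S.card = G.degree (u g) := G.card_neighborFinset_eq_degree _
  have hUA : U ⊆ A := by
    intro x hx
    obtain ⟨i, _, rfl⟩ := Finset.mem_image.mp hx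
    exact huA i
  have hN : ∀ x ∈ U, ∀ y : V, G.Adj x y → y ∈ S := by
    intro x hx y hxy
    obtain ⟨i, hi, rfl⟩ := Finset.mem_image.mp hx
    exact hcomp i (Finset.mem_Iic.mp hi) ((mem_neighborFinset G _ _).mpr hxy)
  have hcardV : Fintype.card V = A.card + B.card := by
    have hunion : A ∪ B = Finset.univ := by
      ext z; simp only [Finset.mem_union, Finset.mem_univ, iff_true]; exact hcov z
    rw [← Finset.card_univ, ← hunion, Finset.card_union_of_disjoint hd]
  have hAcard : (g : ℕ) + 1 ≤ A.card := cardU ▸ Finset.card_le_card hUA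
  obtain ⟨a, b, w, hw⟩ := hham
  have := ham_bound hw U S hN (by omega)
  omega

end Aux

theorem stmt8 [Fintype V] [DecidableEq V] (G : SimpleGraph V) [DecidableRel G.Adj]
    (A B A1 B1 : Finset V) {p q : ℕ} (u : Fin p → V) (v : Fin q → V)
    (hconn : G.Connected) (hbip : IsBipartitionOf G A B)
    (hcb : ChordalBipartite G) (hp5 : PFree 5 G)
    (hmax : IsMaximalBiclique G A B A1 B1)
    -- `u` enumerates `A \ A1` in non-decreasing degree order (NNO)
    (hu : Function.Injective u) (huA : ∀ i, u i ∈ A \ A1)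
    (huAll : ∀ x ∈ A \ A1, ∃ i, u i = x)
    (humono : ∀ i j : Fin p, i ≤ j → G.degree (u i) ≤ G.degree (u j))
    -- `v` enumerates `B \ B1` in non-decreasing degree order (NNO)
    (hv : Function.Injective v) (hvB : ∀ j, v j ∈ B \ B1)
    (hvAll : ∀ y ∈ B \ B1, ∃ j, v j = y)
    (hvmono : ∀ i j : Fin q, i ≤ j → G.degree (v i) ≤ G.degree (v j))
    (hcard : A.card = B.card)
    (hham : ∃ (a b : V) (w : G.Walk a b), w.IsHamiltonian) :
    (∀ g : Fin p, (g : ℕ) + 1 ≤ G.degree (u g)) ∧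
      (∀ h : Fin q, (h : ℕ) + 1 ≤ G.degree (v h)) := by
  obtain ⟨hd, hcov, hadj⟩ := hbip
  constructor
  · intro g
    exact side_bound u hconn hp5 hd hcov hadj hu
      (fun i => (Finset.mem_sdiff.mp (huA i)).1) humono hcard.le hham g
  · intro h
    exact side_bound v hconn hp5 hd.symm (fun x => (hcov x).symm)
      (fun _ _ hxy => (hadj hxy).symm) hv
      (fun i => (Finset.mem_sdiff.mp (hvB i)).1) hvmono hcard.ge hham h
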